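/- Let p be a prime with regular continued fraction √p = ⟨n; a₁, …, a_{l−1}, 2n⟩ of even period length l, and let h_i be the convergent denominators. Then h_{l−1} = h_{l/2−1} · (h_{l/2} + h_{l/2−2}). -/

import Mathlib

/-- State `(m, d)` of the continued fraction algorithm for `√p` at step `i`,
representing the complete quotient `(√p + m) / d`; initial state `(0, 1)`. -/
def cfState (p : ℕ) : ℕ → ℕ × ℕ
  | 0 => (0, 1)
  | i + 1 =>
    let m := (cfState p i).1
    let d := (cfState p i).2
    let a := (Nat.sqrt p + m) / d
    (a * d - m, (p - (a * d - m) ^ 2) / d)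

/-- The `i`-th partial quotient `aᵢ` of the regular continued fraction of `√p`
(so `cfA p 0 = ⌊√p⌋`). -/
def cfA (p i : ℕ) : ℕ := (Nat.sqrt p + (cfState p i).1) / (cfState p i).2

/-- The period length `l` of the regular continued fraction of `√p`. -/
noncomputable def cfPeriod (p : ℕ) : ℕ := sInf {l | 0 < l ∧ cfState p (l + 1) = cfState p 1}

/-- `cfH p (i + 1)` is the denominator `hᵢ` of the `i`-th convergent of `√p`,
with the convention `cfH p 0 = h₋₁ = 0`, `cfH p 1 = h₀ = 1`,
`hᵢ₊₁ = aᵢ₊₁ hᵢ + hᵢ₋₁`. -/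
def cfH (p : ℕ) : ℕ → ℕ
  | 0 => 0
  | 1 => 1
  | i + 2 => cfA p (i + 1) * cfH p (i + 1) + cfH p i


def cont (b : ℕ → ℕ) : ℕ → ℕ
  | 0 => 0
  | 1 => 1
  | i + 2 => b (i + 1) * cont b (i + 1) + cont b i

lemma cont_congr {b c : ℕ → ℕ} : ∀ n, (∀ i, 1 ≤ i → i < n → b i = c i) → cont b n = cont c n
  | 0, _ => rfl
  | 1, _ => rfl
  | n + 2, h => by
    rw [cont, cont, h (n+1) (by omega) (by omega),
      cont_congr (n+1) (fun i h1 h2 => h i h1 (by omega)),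
      cont_congr n (fun i h1 h2 => h i h1 (by omega))]

lemma cont_split (b : ℕ → ℕ) (n : ℕ) : ∀ j,
    cont b (n + j + 1) =
      cont b (n + 1) * cont (fun i => b (n + i)) (j + 1) +
      cont b n * cont (fun i => b (n + 1 + i)) j := by
  intro j
  induction j using Nat.twoStepInduction with
  | zero => simp [cont]
  | one =>
    show cont b (n + 1 + 1) = _
    rw [cont]
    simp only [cont]
    norm_num
    ring
  | more j ih1 ih2 =>
    have e1 : n + (j + 2) + 1 = (n + j + 1) + 2 := by ring
    rw [e1, cont, show n + j + 1 + 1 = n + (j+1) + 1 from by ring, ih2, ih1]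
    show _ = cont b (n+1) * cont (fun i => b (n+i)) ((j+1)+2) + cont b n * cont (fun i => b (n+1+i)) (j+2)
    simp only [cont]
    simp only [show n+(j+1)+1 = n+j+2 from by ring, show n+(j+1+1) = n+j+2 from by ring,
      show n+1+(j+1) = n+j+2 from by ring, show n+(j+1) = n+j+1 from by ring,
      show ∀ k:ℕ, j+1+1 = j+2 from fun _ => rfl]
    ring

lemma cont_front (b : ℕ → ℕ) (j : ℕ) :
    cont b (j + 2) = b 1 * cont (fun i => b (1 + i)) (j + 1) + cont (fun i => b (2 + i)) j := by
  have h := cont_split b 1 j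
  rw [show 1 + j + 1 = j + 2 from by ring] at h
  rw [h]
  norm_num [cont]

lemma cont_rev : ∀ (n : ℕ) (b : ℕ → ℕ), cont b (n + 1) = cont (fun i => b (n + 1 - i)) (n + 1) := by
  intro n
  induction n using Nat.twoStepInduction with
  | zero => intro b; rfl
  | one => intro b; simp [cont]
  | more n ih1 ih2 =>
    intro b
    rw [show n + 2 + 1 = (n + 1) + 2 from rfl, cont, cont_front (fun i => b (n + 2 + 1 - i)) (n + 1)]
    have e1 : cont (fun i => (fun i => b (n + 2 + 1 - i)) (1 + i)) (n + 1 + 1) =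
        cont (fun i => b (n + 1 + 1 - i)) (n + 1 + 1) :=
      cont_congr _ (fun i h1 h2 => by simp only []; congr 1; omega)
    have e2 : cont (fun i => (fun i => b (n + 2 + 1 - i)) (2 + i)) (n + 1) =
        cont (fun i => b (n + 1 - i)) (n + 1) :=
      cont_congr _ (fun i h1 h2 => by simp only []; congr 1; omega)
    rw [e1, e2, ← ih1, ← ih2]
    simp only [show n + 2 + 1 - 1 = n + 2 from by omega]

lemma cont_palindrome (b : ℕ → ℕ) (m : ℕ) (hm : 1 ≤ m)
    (hpal : ∀ i, 1 ≤ i → i ≤ 2 * m - 1 → b (2 * m - i) = b i) :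
    cont b (2 * m) = cont b m * (cont b (m + 1) + cont b (m - 1)) := by
  obtain ⟨m, rfl⟩ : ∃ k, m = k + 1 := ⟨m - 1, by omega⟩
  have hsplit := cont_split b (m + 1) m
  rw [show m + 1 + m + 1 = 2 * (m + 1) from by ring] at hsplit
  -- first tail continuant equals cont b (m+1)
  have h1 : cont (fun i => b (m + 1 + i)) (m + 1) = cont b (m + 1) := by
    rw [cont_rev m (fun i => b (m + 1 + i))]
    exact cont_congr _ (fun i h1 h2 => by
      rw [show m + 1 + (m + 1 - i) = 2 * (m + 1) - i from by omega]
      exact hpal i h1 (by omega))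
  -- second tail continuant equals cont b m
  have h2 : cont (fun i => b (m + 1 + 1 + i)) m = cont b m := by
    rcases Nat.eq_zero_or_pos m with rfl | hm1
    · rfl
    obtain ⟨k, rfl⟩ : ∃ k, m = k + 1 := ⟨m - 1, by omega⟩
    rw [cont_rev k (fun i => b (k + 1 + 1 + 1 + i))]
    exact cont_congr _ (fun i h1 h2 => by
      rw [show k + 1 + 1 + 1 + (k + 1 - i) = 2 * (k + 1 + 1) - i from by omega]
      exact hpal i h1 (by omega))
  rw [hsplit, h1, h2]
  simp only [Nat.add_sub_cancel]
  ring

def nxm (p m d : ℕ) : ℕ := (Nat.sqrt p + m) / d * d - m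
def nxd (p m d : ℕ) : ℕ := (p - nxm p m d ^ 2) / d

lemma cfState_succ (p i : ℕ) :
    cfState p (i + 1) = (nxm p (cfState p i).1 (cfState p i).2,
      nxd p (cfState p i).1 (cfState p i).2) := rfl

def Red (p : ℕ) (md : ℕ × ℕ) : Prop :=
  0 < md.2 ∧ md.1 ≤ Nat.sqrt p ∧ Nat.sqrt p < md.1 + md.2 ∧ md.2 ≤ Nat.sqrt p + md.1 ∧
    md.2 ∣ p - md.1 ^ 2

lemma sqrt_sq_lt {p : ℕ} (hp : p.Prime) : Nat.sqrt p * Nat.sqrt p < p := by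
  rcases Nat.lt_or_ge (Nat.sqrt p * Nat.sqrt p) p with h | h
  · exact h
  · exfalso
    have h2 := Nat.sqrt_le p
    have he : p = Nat.sqrt p * Nat.sqrt p := le_antisymm h h2
    have hdvd : Nat.sqrt p ∣ p := ⟨Nat.sqrt p, he⟩
    have h2le := hp.two_le
    rcases (Nat.Prime.eq_one_or_self_of_dvd hp _ hdvd) with h1 | h1
    · rw [h1] at he; simp at he; omega
    · rw [h1] at he; nlinarith

lemma step_facts {p : ℕ} (hp : p.Prime) {m d : ℕ} (hred : Red p (m, d)) :
    m + nxm p m d = (Nat.sqrt p + m) / d * d ∧ nxm p m d ≤ Nat.sqrt p ∧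
      Nat.sqrt p < nxm p m d + d ∧ 1 ≤ nxm p m d ∧
      d * nxd p m d = p - nxm p m d ^ 2 ∧ Red p (nxm p m d, nxd p m d) := by
  obtain ⟨hdpos, hmle, hwin, hdle, hdvd⟩ := hred
  simp only at hdpos hmle hwin hdle hdvd
  set s := Nat.sqrt p with hs
  have hs2 : s * s < p := sqrt_sq_lt hp
  have hs2' : p < (s + 1) * (s + 1) := Nat.lt_succ_sqrt p
  have hs1 : 1 ≤ s := by nlinarith [hp.two_le]
  set a := (s + m) / d with ha
  have ha1 : 1 ≤ a := (Nat.one_le_div_iff hdpos).2 hdle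
  have hxle : a * d ≤ s + m := Nat.div_mul_le_self (s + m) d
  have hxgt : s + m < a * d + d := by
    have h1 : (s + m) / d < a + 1 := by omega
    have := (Nat.div_lt_iff_lt_mul hdpos).1 h1
    nlinarith
  have hda : d ≤ a * d := Nat.le_mul_of_pos_left d ha1
  have hmad : m ≤ a * d := by
    rcases Nat.lt_or_ge s d with h | h <;> omega
  have hm' : nxm p m d = a * d - m := rfl
  set m' := nxm p m d with hm'def
  have hm'add : m + m' = a * d := by omega
  have hm'le : m' ≤ s := by omega
  have hm'win : s < m' + d := by omega
  have hm'pos : 1 ≤ m' := by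
    rcases Nat.lt_or_ge s d with h | h <;> omega
  have hm'sq : m' ^ 2 < p := by
    have h1 : m' * m' ≤ s * s := Nat.mul_le_mul hm'le hm'le
    rw [sq]; omega
  have hmsq : m ^ 2 < p := by
    have h1 : m * m ≤ s * s := Nat.mul_le_mul hmle hmle
    rw [sq]; omega
  have hle' : m' ^ 2 ≤ p := le_of_lt hm'sq
  have hle : m ^ 2 ≤ p := le_of_lt hmsq
  -- divisibility of p - m'^2 by d
  have hdvd' : d ∣ p - m' ^ 2 := by
    rw [← Int.natCast_dvd_natCast, Nat.cast_sub hle']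
    obtain ⟨k, hk⟩ := hdvd
    have hk' : (p : ℤ) - (m : ℤ) ^ 2 = (d : ℤ) * (k : ℤ) := by zify [hle] at hk; exact_mod_cast hk
    have hmm : (m : ℤ) + (m' : ℤ) = (a : ℤ) * (d : ℤ) := by exact_mod_cast hm'add
    refine ⟨(k : ℤ) + (a : ℤ) * ((m : ℤ) - (m' : ℤ)), ?_⟩
    push_cast
    linear_combination hk' + ((m : ℤ) - (m' : ℤ)) * hmm
  have hd'eq : nxd p m d = (p - m' ^ 2) / d := rfl
  set d' := nxd p m d with hd'def
  have hdd' : d * d' = p - m' ^ 2 := by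
    rw [hd'eq]; exact Nat.mul_div_cancel' hdvd'
  have hd'pos : 0 < d' := by
    rcases Nat.eq_zero_or_pos d' with h | h
    · exfalso; rw [h, Nat.mul_zero] at hdd'; omega
    · exact h
  -- d' ≤ s + m'
  have hd'le : d' ≤ s + m' := by
    by_contra hcon
    push_neg at hcon
    have h1 : s + m' + 1 ≤ d' := hcon
    have h2 : s + 1 ≤ m' + d := hm'win
    have key : (d : ℤ) * d' = (p : ℤ) - (m' : ℤ) ^ 2 := by zify [hle'] at hdd'; exact_mod_cast hdd'
    have hz1 : ((s : ℤ) - m' + 1) ≤ (d : ℤ) := by omega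
    have hz2 : ((s : ℤ) + m' + 1) ≤ (d' : ℤ) := by omega
    have hprod : ((s : ℤ) - m' + 1) * ((s : ℤ) + m' + 1) ≤ (d : ℤ) * d' :=
      mul_le_mul hz1 hz2 (by positivity) (by positivity)
    have e : ((s : ℤ) - m' + 1) * ((s : ℤ) + m' + 1) = ((s : ℤ) + 1) * ((s : ℤ) + 1) - (m' : ℤ) ^ 2 := by ring
    have hpz : (p : ℤ) < ((s : ℤ) + 1) * ((s : ℤ) + 1) := by exact_mod_cast hs2'
    linarith [hprod, key]
  -- s < m' + d'
  have hd'win : s < m' + d' := by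
    by_contra hcon
    push_neg at hcon
    -- m' + d' ≤ s
    have key : (d : ℤ) * d' = (p : ℤ) - (m' : ℤ) ^ 2 := by zify [hle'] at hdd'; exact_mod_cast hdd'
    have hz1 : ((d' : ℤ)) ≤ (s : ℤ) - m' := by omega
    have hz2 : ((s : ℤ) + m') ≤ (d : ℤ) ∨ (d : ℤ) ≤ (s : ℤ) + m' := le_total _ _
    -- show d > s + m' leads to contradiction, and d ≤ s + m' also
    have hbig : ((s : ℤ) - m') * ((s : ℤ) + m') < (d : ℤ) * d' := by
      have hq : (s : ℤ) * s < (p : ℤ) := by exact_mod_cast hs2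
      nlinarith [key]
    -- since d' ≤ s - m', we get d * d' ≤ d * (s - m')
    have h3 : (d : ℤ) * d' ≤ (d : ℤ) * ((s : ℤ) - m') := by
      apply mul_le_mul_of_nonneg_left hz1 (by positivity)
    have h4 : ((s : ℤ) - m') * ((s : ℤ) + m') < (d : ℤ) * ((s : ℤ) - m') := lt_of_lt_of_le hbig h3
    have h5 : (0 : ℤ) < (s : ℤ) - m' := by
      rcases lt_or_ge (0 : ℤ) ((s : ℤ) - m') with h | h
      · exact h
      · exfalso
        have : (d' : ℤ) ≤ 0 := le_trans hz1 h
        have : (0 : ℤ) < d' := by exact_mod_cast hd'pos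
        omega
    have h6 : (s : ℤ) + m' < d := by
      have := lt_of_mul_lt_mul_right (by linarith [h4] : ((s : ℤ) + m') * ((s : ℤ) - m') < (d : ℤ) * ((s : ℤ) - m')) h5.le
      exact this
    -- but d ≤ s + m and m' + m ≥ d
    have h7 : (d : ℤ) ≤ (s : ℤ) + m := by exact_mod_cast hdle
    have h8 : (d : ℤ) ≤ (m : ℤ) + m' := by
      have : d ≤ m + m' := by omega
      exact_mod_cast this
    omega
  refine ⟨by omega, hm'le, hm'win, hm'pos, hdd', hd'pos, hm'le, hd'win, hd'le, ?_⟩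
  exact ⟨d, by rw [← hdd', Nat.mul_comm]⟩

lemma cfState_one (p : ℕ) : cfState p 1 = (Nat.sqrt p, p - Nat.sqrt p ^ 2) := by
  rw [cfState_succ]
  simp [cfState, nxm, nxd]

lemma red_one {p : ℕ} (hp : p.Prime) : Red p (cfState p 1) := by
  rw [cfState_one]
  have hs2 : Nat.sqrt p * Nat.sqrt p < p := sqrt_sq_lt hp
  have hs2' : p < (Nat.sqrt p + 1) * (Nat.sqrt p + 1) := Nat.lt_succ_sqrt p
  have he : (Nat.sqrt p + 1) * (Nat.sqrt p + 1) = Nat.sqrt p * Nat.sqrt p + 2 * Nat.sqrt p + 1 := by ring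
  refine ⟨by simp; rw [sq]; omega, le_refl _, by simp; rw [sq]; omega, by simp; rw [sq]; omega, dvd_refl _⟩

lemma red_state {p : ℕ} (hp : p.Prime) : ∀ i, 1 ≤ i → Red p (cfState p i) := by
  intro i hi
  induction i with
  | zero => omega
  | succ n ih =>
    rcases Nat.eq_zero_or_pos n with rfl | hn
    · exact red_one hp
    · have h := step_facts hp (by rw [Prod.mk.eta]; exact ih hn)
      rw [cfState_succ]
      exact h.2.2.2.2.2

lemma fact_all {p : ℕ} (hp : p.Prime) (i : ℕ) :
    (cfState p i).1 + (cfState p (i+1)).1 = cfA p i * (cfState p i).2 ∧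
    (cfState p (i+1)).1 ≤ Nat.sqrt p ∧
    Nat.sqrt p < (cfState p (i+1)).1 + (cfState p i).2 ∧
    (cfState p i).2 * (cfState p (i+1)).2 = p - (cfState p (i+1)).1 ^ 2 := by
  have hs2 : Nat.sqrt p * Nat.sqrt p < p := sqrt_sq_lt hp
  rcases Nat.eq_zero_or_pos i with rfl | hi
  · rw [cfState_one]
    refine ⟨?_, le_refl _, ?_, ?_⟩
    · show 0 + Nat.sqrt p = cfA p 0 * 1
      simp [cfA, cfState]
    · show Nat.sqrt p < Nat.sqrt p + (cfState p 0).2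
      simp [cfState]
    · show (cfState p 0).2 * (p - Nat.sqrt p ^ 2) = p - Nat.sqrt p ^ 2
      simp [cfState]
  · have hred := red_state hp i hi
    have h := step_facts hp (p := p) (m := (cfState p i).1) (d := (cfState p i).2) (by rw [Prod.mk.eta]; exact hred)
    rw [cfState_succ]
    exact ⟨h.1, h.2.1, h.2.2.1, h.2.2.2.2.1⟩

lemma sym {p l : ℕ} (hp : p.Prime) (hl1 : 1 ≤ l)
    (hper : cfState p (l + 1) = cfState p 1) :
    ∀ j, j ≤ l - 1 →
      (cfState p (l - j)).2 = (cfState p j).2 ∧ (cfState p (l - j)).1 = (cfState p (j + 1)).1 := by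
  have hs2 : Nat.sqrt p * Nat.sqrt p < p := sqrt_sq_lt hp
  -- base facts
  have hbase : (cfState p l).2 = 1 ∧ (cfState p l).1 = Nat.sqrt p := by
    have h := (fact_all hp l).2.2.2
    rw [hper, cfState_one] at h
    -- h : (cfState p l).2 * (p - sqrt^2) = p - sqrt^2
    have hpos : 0 < p - Nat.sqrt p ^ 2 := by rw [sq]; omega
    have hd : (cfState p l).2 = 1 := by
      rcases Nat.eq_zero_or_pos (cfState p l).2 with h0 | h0
      · rw [h0] at h; simp at h; omega
      · nlinarith [h]
    have hred := red_state hp l hl1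
    obtain ⟨_, hmle, hwin, _, _⟩ := hred
    rw [hd] at hwin
    exact ⟨hd, by omega⟩
  intro j
  induction j with
  | zero =>
    intro _
    simp only [Nat.sub_zero]
    refine ⟨?_, ?_⟩
    · rw [hbase.1]; rfl
    · rw [hbase.2, cfState_one]
  | succ j ih =>
    intro hj
    have hj' : j ≤ l - 1 := by omega
    obtain ⟨hA, hB⟩ := ih hj'
    have hlj : 2 ≤ l - j := by omega
    -- facts at index l - j - 1
    obtain ⟨hq1, hq2, hq3, hq4⟩ := fact_all hp (l - j - 1)
    rw [(show l - j - 1 + 1 = l - j by omega)] at hq1 hq2 hq3 hq4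
    -- facts at index j
    obtain ⟨hr1, hr2, hr3, hr4⟩ := fact_all hp j
    -- A(j+1) : d_{l-j-1} = d_{j+1}
    have hdljpos : 0 < (cfState p (l - j)).2 := (red_state hp (l - j) (by omega)).1
    have hAnew : (cfState p (l - j - 1)).2 = (cfState p (j + 1)).2 := by
      rw [hB] at hq4
      -- hq4 : d_{l-j-1} * d_{l-j} = p - m_{j+1}^2 ; hr4 : d_j * d_{j+1} = p - m_{j+1}^2
      rw [hA] at hq4
      have := hq4.trans hr4.symm
      have hdj : 0 < (cfState p j).2 := by rwa [hA] at hdljpos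
      exact Nat.eq_of_mul_eq_mul_left hdj (by rw [Nat.mul_comm] at this ⊢; omega)
    -- B(j+1) : m_{l-j-1} = m_{j+2}
    have hBnew : (cfState p (l - j - 1)).1 = (cfState p (j + 2)).1 := by
      -- facts at index j+1
      obtain ⟨hu1, hu2, hu3, hu4⟩ := fact_all hp (j + 1)
      rw [show j + 1 + 1 = j + 2 from rfl] at hu1 hu2 hu3
      -- window for m_{l-j-1} from Red at l - j - 1 ≥ 1
      have hred := red_state hp (l - j - 1) (by omega)
      obtain ⟨_, hmle, hwin, _, _⟩ := hred
      -- rewrite everything over D := d_{j+1}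
      rw [hB] at hq1
      rw [hAnew] at hq1 hwin
      -- hq1 : m_{l-j-1} + m_{j+1} = cfA p (l-j-1) * d_{j+1}
      -- hu1 : m_{j+1} + m_{j+2} = cfA p (j+1) * d_{j+1}
      have ht : (Nat.sqrt p + (cfState p (j+1)).1) / (cfState p (j+1)).2 = cfA p (l - j - 1) := by
        apply Nat.div_eq_of_lt_le
        · omega
        · rw [add_mul, one_mul]; omega
      have hu : (Nat.sqrt p + (cfState p (j+1)).1) / (cfState p (j+1)).2 = cfA p (j + 1) := by
        apply Nat.div_eq_of_lt_le
        · omega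
        · rw [add_mul, one_mul]; omega
      have : cfA p (l - j - 1) = cfA p (j + 1) := ht.symm.trans hu
      rw [this] at hq1
      omega
    rw [(show l - (j+1) = l - j - 1 by omega)]
    exact ⟨hAnew, hBnew⟩

lemma palindrome {p l : ℕ} (hp : p.Prime) (hl1 : 1 ≤ l)
    (hper : cfState p (l + 1) = cfState p 1) :
    ∀ i, 1 ≤ i → i ≤ l - 1 → cfA p (l - i) = cfA p i := by
  intro i hi1 hi2
  obtain ⟨hA, hB⟩ := sym hp hl1 hper i hi2
  obtain ⟨hdpos, hmle, hwin, _, _⟩ := red_state hp i (by omega)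
  obtain ⟨hm1, _, _, _⟩ := fact_all hp i
  show (Nat.sqrt p + (cfState p (l - i)).1) / (cfState p (l - i)).2 = cfA p i
  rw [hA, hB]
  apply Nat.div_eq_of_lt_le
  · omega
  · rw [add_mul, one_mul]; omega


lemma cfH_eq_cont (p : ℕ) : ∀ n, cfH p n = cont (cfA p) n := by
  intro n
  induction n using Nat.twoStepInduction with
  | zero => rfl
  | one => rfl
  | more n ih1 ih2 => rw [cfH, cont, ih1, ih2]

theorem stmt2 (p : ℕ) (hp : p.Prime) (hl : Even (cfPeriod p)) :
    cfH p (cfPeriod p) =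
      cfH p (cfPeriod p / 2) * (cfH p (cfPeriod p / 2 + 1) + cfH p (cfPeriod p / 2 - 1)) := by
  rcases Nat.eq_zero_or_pos (cfPeriod p) with h0 | hpos
  · rw [h0]; norm_num [cfH]
  · have hne : {l | 0 < l ∧ cfState p (l + 1) = cfState p 1}.Nonempty := by
      by_contra h
      rw [Set.not_nonempty_iff_eq_empty] at h
      have : cfPeriod p = 0 := by rw [cfPeriod, h, Nat.sInf_empty]
      omega
    have hmem : 0 < cfPeriod p ∧ cfState p (cfPeriod p + 1) = cfState p 1 := Nat.sInf_mem hne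
    obtain ⟨hlpos, hper⟩ := hmem
    obtain ⟨m, hm⟩ := hl
    have hm1 : 1 ≤ m := by omega
    have hpal := palindrome hp (by omega) hper
    have h2m : cfPeriod p = 2 * m := by omega
    have hcont := cont_palindrome (cfA p) m hm1 (fun i h1 h2 => by
      rw [← h2m] at h2 ⊢
      exact hpal i h1 h2)
    rw [h2m, Nat.mul_div_cancel_left m (by norm_num), cfH_eq_cont, cfH_eq_cont, cfH_eq_cont,
      cfH_eq_cont]
    exact hcont
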